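/- Let Φ satisfy the squared-form RIC with parameters (s + |supp(x)|, δ). Then for any vector x ∈ ℝ^N and any set T of size at most s disjoint from supp(x), the proxy y = Φ*Φx satisfies ‖y|_T‖₂ ≤ δ‖x‖₂. -/

import Mathlib

open Finset

/-- The ℓ₂ norm on ℝ^N. -/
noncomputable def l2 {N : ℕ} (v : Fin N → ℝ) : ℝ := Real.sqrt (∑ i, v i ^ 2)

/-- The ℓ₁ norm on ℝ^N. -/
def l1 {N : ℕ} (v : Fin N → ℝ) : ℝ := ∑ i, |v i|

/-- A vector is `s`-sparse if it has at most `s` nonzero coordinates. -/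
def Sparse {N : ℕ} (s : ℕ) (v : Fin N → ℝ) : Prop :=
  (Finset.univ.filter fun j => v j ≠ 0).card ≤ s

/-- Restricted isometry condition with parameters (n, δ). -/
def RIC {m N : ℕ} (Φ : Matrix (Fin m) (Fin N) ℝ) (n : ℕ) (δ : ℝ) : Prop :=
  ∀ v : Fin N → ℝ, Sparse n v →
    (1 - δ) * l2 v ≤ l2 (Φ.mulVec v) ∧ l2 (Φ.mulVec v) ≤ (1 + δ) * l2 v

/-- Squared-form restricted isometry condition with parameters (n, δ). -/
def RICsq {m N : ℕ} (Φ : Matrix (Fin m) (Fin N) ℝ) (n : ℕ) (δ : ℝ) : Prop :=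
  ∀ v : Fin N → ℝ, Sparse n v →
    (1 - δ) * (l2 v) ^ 2 ≤ (l2 (Φ.mulVec v)) ^ 2 ∧
    (l2 (Φ.mulVec v)) ^ 2 ≤ (1 + δ) * (l2 v) ^ 2

/-- `xs` is the vector keeping the `s` largest-magnitude coordinates of `x`
(other coordinates set to 0). -/
def IsLargest {N : ℕ} (s : ℕ) (x xs : Fin N → ℝ) : Prop :=
  ∃ T : Finset (Fin N), T.card = min s N ∧
    (∀ i, xs i = if i ∈ T then x i else 0) ∧
    ∀ i ∈ T, ∀ j ∉ T, |x j| ≤ |x i|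


lemma l2_sq {N : ℕ} (v : Fin N → ℝ) : (l2 v) ^ 2 = ∑ i, v i ^ 2 := by
  unfold l2
  exact Real.sq_sqrt (Finset.sum_nonneg fun i _ => sq_nonneg _)

lemma key_polar {m N n : ℕ} (Φ : Matrix (Fin m) (Fin N) ℝ) (δ : ℝ)
    (h : RICsq Φ n δ) (a b : Fin N → ℝ)
    (ha : Sparse n (a + b)) (hb : Sparse n (a - b)) :
    ∑ i, Φ.mulVec a i * Φ.mulVec b i ≤
      ∑ i, a i * b i + δ / 2 * (∑ i, a i ^ 2 + ∑ i, b i ^ 2) := by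
  have h1 := (h _ ha).2
  have h2 := (h _ hb).1
  rw [l2_sq, l2_sq, Matrix.mulVec_add] at h1
  rw [l2_sq, l2_sq, Matrix.mulVec_sub] at h2
  have e1 : ∀ (k : ℕ) (f g : Fin k → ℝ),
      ∑ i, (f i + g i) ^ 2 = ∑ i, f i ^ 2 + 2 * ∑ i, f i * g i + ∑ i, g i ^ 2 := by
    intro k f g
    rw [Finset.mul_sum, ← Finset.sum_add_distrib, ← Finset.sum_add_distrib]
    exact Finset.sum_congr rfl fun i _ => by ring
  have e2 : ∀ (k : ℕ) (f g : Fin k → ℝ),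
      ∑ i, (f i - g i) ^ 2 = ∑ i, f i ^ 2 - 2 * ∑ i, f i * g i + ∑ i, g i ^ 2 := by
    intro k f g
    rw [Finset.mul_sum, ← Finset.sum_sub_distrib, ← Finset.sum_add_distrib]
    exact Finset.sum_congr rfl fun i _ => by ring
  have ha1 : ∀ i, (a + b) i = a i + b i := fun i => rfl
  have hb1 : ∀ i, (a - b) i = a i - b i := fun i => rfl
  simp only [Pi.add_apply, Pi.sub_apply] at h1 h2
  rw [e1, e1] at h1
  rw [e2, e2] at h2
  linarith


theorem proxy_off_support {m N s : ℕ} (Φ : Matrix (Fin m) (Fin N) ℝ) (δ : ℝ)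
    (x : Fin N → ℝ)
    (h : RICsq Φ (s + (Finset.univ.filter fun j => x j ≠ 0).card) δ)
    (T : Finset (Fin N)) (hT : T.card ≤ s) (hdisj : ∀ i ∈ T, x i = 0) :
    l2 (fun i => if i ∈ T then (Φ.transpose.mulVec (Φ.mulVec x)) i else 0) ≤
      δ * l2 x := by
  set n := s + (Finset.univ.filter fun j => x j ≠ 0).card with hn
  set y : Fin N → ℝ := Φ.transpose.mulVec (Φ.mulVec x) with hy
  set u : Fin N → ℝ := fun i => if i ∈ T then y i else 0 with hu
  set Su : ℝ := ∑ i, u i ^ 2 with hSu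
  set Sx : ℝ := ∑ i, x i ^ 2 with hSx
  have hSu0 : 0 ≤ Su := Finset.sum_nonneg fun i _ => sq_nonneg _
  have hSx0 : 0 ≤ Sx := Finset.sum_nonneg fun i _ => sq_nonneg _
  have hl2u : l2 u = Real.sqrt Su := rfl
  have hl2x : l2 x = Real.sqrt Sx := rfl
  -- case x = 0
  rcases eq_or_lt_of_le hSx0 with hSxz | hSxpos
  · have hx0 : ∀ i, x i = 0 := by
      intro i
      have := (Finset.sum_eq_zero_iff_of_nonneg (fun i _ => sq_nonneg (x i))).1
        hSxz.symm i (Finset.mem_univ i)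
      exact pow_eq_zero_iff (n := 2) (by norm_num) |>.1 this
    have hxe : x = 0 := funext hx0
    have hy0 : y = 0 := by rw [hy, hxe, Matrix.mulVec_zero, Matrix.mulVec_zero]
    have hu0 : ∀ i, u i = 0 := by
      intro i; simp [hu, hy0]
    have hSuz : Su = 0 := by
      rw [hSu]; exact Finset.sum_eq_zero fun i _ => by rw [hu0 i]; ring
    rw [hl2u, hl2x, hSuz, ← hSxz, Real.sqrt_zero, mul_zero]
  -- δ ≥ 0
  have hxs : Sparse n x := Nat.le_add_left _ _
  have hδ : 0 ≤ δ := by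
    obtain ⟨h1, h2⟩ := h x hxs
    simp only [l2_sq] at h1 h2
    nlinarith [le_trans h1 h2]
  -- support of u
  have husupp : ∀ i, u i ≠ 0 → i ∈ T := by
    intro i hi
    by_contra hiT
    exact hi (by simp [hu, hiT])
  -- sparsity of combinations c • u ± x
  have hsparse : ∀ v : Fin N → ℝ, (∀ i, v i ≠ 0 → u i ≠ 0 ∨ x i ≠ 0) → Sparse n v := by
    intro v hv
    have hsub : (Finset.univ.filter fun j => v j ≠ 0) ⊆
        T ∪ (Finset.univ.filter fun j => x j ≠ 0) := by
      intro i hi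
      rw [Finset.mem_filter] at hi
      rcases hv i hi.2 with h1 | h1
      · exact Finset.mem_union_left _ (husupp i h1)
      · exact Finset.mem_union_right _ (by simp [h1])
    calc (Finset.univ.filter fun j => v j ≠ 0).card
        ≤ (T ∪ (Finset.univ.filter fun j => x j ≠ 0)).card := Finset.card_le_card hsub
      _ ≤ T.card + (Finset.univ.filter fun j => x j ≠ 0).card := Finset.card_union_le _ _
      _ ≤ n := Nat.add_le_add_right hT _
  -- ∑ u i * x i = 0
  have hux : ∑ i, u i * x i = 0 := by
    apply Finset.sum_eq_zero
    intro i _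
    by_cases hi : i ∈ T
    · rw [hdisj i hi, mul_zero]
    · simp [hu, hi]
  -- ∑ Φu i * Φx i = Su
  have hip : ∑ i, Φ.mulVec u i * Φ.mulVec x i = Su := by
    have h1 : dotProduct (Φ.mulVec u) (Φ.mulVec x) = dotProduct u y := by
      rw [hy, Matrix.dotProduct_mulVec u, Matrix.vecMul_transpose]
    have h2 : dotProduct u y = Su := by
      rw [dotProduct, hSu]
      apply Finset.sum_congr rfl
      intro i _
      by_cases hi : i ∈ T
      · simp [hu, hi]; ring
      · simp [hu, hi]
    rw [← h2, ← h1]; rfl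
  -- case u = 0
  rcases eq_or_lt_of_le hSu0 with hSuz | hSupos
  · rw [hl2u, hl2x, ← hSuz, Real.sqrt_zero]
    positivity
  -- main case
  set t : ℝ := Real.sqrt (Sx / Su) with ht
  have htpos : 0 < t := Real.sqrt_pos.2 (div_pos hSxpos hSupos)
  have ht2 : t ^ 2 = Sx / Su := Real.sq_sqrt (le_of_lt (div_pos hSxpos hSupos))
  set a : Fin N → ℝ := fun i => t * u i with haa
  have hmva : Φ.mulVec a = fun j => t * Φ.mulVec u j := by
    have : a = t • u := by funext i; simp [haa]
    rw [this, Matrix.mulVec_smul]; rfl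
  have hsp1 : Sparse n (a + x) := by
    apply hsparse
    intro i hi
    by_contra hc
    push_neg at hc
    apply hi
    simp only [Pi.add_apply, haa, hc.1, hc.2, mul_zero, add_zero]
  have hsp2 : Sparse n (a - x) := by
    apply hsparse
    intro i hi
    by_contra hc
    push_neg at hc
    apply hi
    simp only [Pi.sub_apply, haa, hc.1, hc.2, mul_zero, sub_zero]
  have hkey := key_polar Φ δ h a x hsp1 hsp2
  have e1 : ∑ i, Φ.mulVec a i * Φ.mulVec x i = t * Su := by
    rw [hmva, ← hip, Finset.mul_sum]
    exact Finset.sum_congr rfl fun i _ => by ring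
  have e2 : ∑ i, a i * x i = 0 := by
    rw [← mul_zero t, ← hux, Finset.mul_sum]
    exact Finset.sum_congr rfl fun i _ => by ring
  have e3 : ∑ i, a i ^ 2 = Sx := by
    have : ∑ i, a i ^ 2 = t ^ 2 * Su := by
      rw [hSu, Finset.mul_sum]
      exact Finset.sum_congr rfl fun i _ => by ring
    rw [this, ht2, div_mul_cancel₀ _ (ne_of_gt hSupos)]
  rw [e1, e2, e3] at hkey
  -- hkey : t * Su ≤ 0 + δ/2 * (Sx + Sx)
  have htval : t * Su = Real.sqrt Sx * Real.sqrt Su := by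
    have hdiv : t = Real.sqrt Sx / Real.sqrt Su := Real.sqrt_div hSx0 _
    have hmul : Real.sqrt Su * Real.sqrt Su = Su := Real.mul_self_sqrt hSu0
    have hne : Real.sqrt Su ≠ 0 := ne_of_gt (Real.sqrt_pos.2 hSupos)
    rw [hdiv, ← hmul]
    field_simp
    rw [Real.sqrt_sq (Real.sqrt_nonneg _)]
  rw [htval] at hkey
  rw [hl2u, hl2x]
  nlinarith [Real.sqrt_pos.2 hSxpos, Real.sq_sqrt hSx0, Real.sqrt_nonneg Su]
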